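/- If there exists a Hadamard matrix of size n+1, then G_n contains at least |V(G_n)|/n^2 pairwise vertex-disjoint cliques of size n. -/

import Mathlib

open Finset

/-- A Hadamard matrix: entries in `{-1,1}` and pairwise orthogonal rows. -/
def IsHadamard {m : ℕ} (M : Matrix (Fin m) (Fin m) ℝ) : Prop :=
  (∀ i j, M i j = 1 ∨ M i j = -1) ∧ ∀ i j, i ≠ j → ∑ k, M i k * M j k = 0

/-- The graph `G_n`. -/
def Gn (n : ℕ) :
    SimpleGraph {x : Fin n → Bool // hammingDist x (fun _ => false) = (n + 1) / 2} :=
  SimpleGraph.fromRel (fun x y => hammingDist x.1 y.1 = (n + 1) / 2)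

namespace Stmt6Aux

abbrev Vtx (n : ℕ) := {x : Fin n → Bool // hammingDist x (fun _ => false) = (n + 1) / 2}

lemma hd_reindex {n : ℕ} (σ : Equiv.Perm (Fin n)) (x y : Fin n → Bool) :
    hammingDist (x ∘ σ) (y ∘ σ) = hammingDist x y := by
  unfold hammingDist
  exact Finset.card_equiv σ (fun i => by simp)

def permAct {n : ℕ} (σ : Equiv.Perm (Fin n)) (x : Vtx n) : Vtx n :=
  ⟨x.1 ∘ σ, by
    have h := hd_reindex σ x.1 (fun _ => false)
    simpa [Function.comp] using h.trans x.2⟩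

lemma permAct_injective {n : ℕ} (σ : Equiv.Perm (Fin n)) :
    Function.Injective (permAct σ) := by
  intro a b h
  apply Subtype.ext
  have h1 : a.1 ∘ σ = b.1 ∘ σ := congrArg Subtype.val h
  funext i
  have := congrFun h1 (σ.symm i)
  simpa using this

lemma permAct_permAct {n : ℕ} (ρ σ : Equiv.Perm (Fin n)) (x : Vtx n) :
    permAct ρ (permAct σ x) = permAct (ρ.trans σ) x := rfl

lemma permAct_refl {n : ℕ} (x : Vtx n) : permAct (Equiv.refl (Fin n)) x = x := rfl

lemma adj_permAct {n : ℕ} (σ : Equiv.Perm (Fin n)) {a b : Vtx n} (h : (Gn n).Adj a b) :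
    (Gn n).Adj (permAct σ a) (permAct σ b) := by
  rw [Gn, SimpleGraph.fromRel_adj] at h ⊢
  obtain ⟨hne, hd⟩ := h
  refine ⟨fun hc => hne (permAct_injective σ hc), ?_⟩
  have e1 : hammingDist ((permAct σ a).1) ((permAct σ b).1) = hammingDist a.1 b.1 :=
    hd_reindex σ a.1 b.1
  have e2 : hammingDist ((permAct σ b).1) ((permAct σ a).1) = hammingDist b.1 a.1 :=
    hd_reindex σ b.1 a.1
  rw [e1, e2]
  exact hd

lemma clique_image {n : ℕ} (σ : Equiv.Perm (Fin n)) {C : Finset (Vtx n)}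
    (h : (Gn n).IsNClique n C) : (Gn n).IsNClique n (C.image (permAct σ)) := by
  constructor
  · intro a ha b hb hne
    simp only [coe_image, Set.mem_image, mem_coe] at ha hb
    obtain ⟨a', ha', rfl⟩ := ha
    obtain ⟨b', hb', rfl⟩ := hb
    have hab : a' ≠ b' := fun hc => hne (by rw [hc])
    exact adj_permAct σ (h.1 ha' hb' hab)
  · rw [Finset.card_image_of_injective _ (permAct_injective σ)]
    exact h.2

/-- Transitivity of the permutation action on vertices. -/
lemma exists_perm_eq {n : ℕ} (a b : Vtx n) : ∃ σ : Equiv.Perm (Fin n), permAct σ a = b := by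
  classical
  set p : Fin n → Prop := fun i => b.1 i = true with hp
  set q : Fin n → Prop := fun i => a.1 i = true with hq
  have hwa : (univ.filter q).card = (n + 1) / 2 := by
    have h := a.2
    unfold hammingDist at h
    have he : (univ.filter q) = univ.filter (fun i => a.1 i ≠ (fun _ => false) i) := by
      ext i; simp [hq]
    rw [he]; exact h
  have hwb : (univ.filter p).card = (n + 1) / 2 := by
    have h := b.2
    unfold hammingDist at h
    have he : (univ.filter p) = univ.filter (fun i => b.1 i ≠ (fun _ => false) i) := by
      ext i; simp [hp]
    rw [he]; exact h
  have hcard : Fintype.card {i // p i} = Fintype.card {i // q i} := by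
    rw [Fintype.card_subtype, Fintype.card_subtype, hwa, hwb]
  have hcard' : Fintype.card {i // ¬ p i} = Fintype.card {i // ¬ q i} := by
    rw [Fintype.card_subtype_compl, Fintype.card_subtype_compl, hcard]
  let e₁ : {i // p i} ≃ {i // q i} := Fintype.equivOfCardEq hcard
  let e₂ : {i // ¬ p i} ≃ {i // ¬ q i} := Fintype.equivOfCardEq hcard'
  let e : Equiv.Perm (Fin n) :=
    (Equiv.sumCompl p).symm.trans ((Equiv.sumCongr e₁ e₂).trans (Equiv.sumCompl q))
  have he : ∀ i, q (e i) ↔ p i := by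
    intro i
    by_cases h : p i
    · simp only [e, Equiv.trans_apply, Equiv.sumCompl_symm_apply_of_pos h,
        Equiv.sumCongr_apply, Sum.map_inl, Equiv.sumCompl_apply_inl]
      exact iff_of_true (e₁ ⟨i, h⟩).2 h
    · simp only [e, Equiv.trans_apply, Equiv.sumCompl_symm_apply_of_neg h,
        Equiv.sumCongr_apply, Sum.map_inr, Equiv.sumCompl_apply_inr]
      exact iff_of_false (e₂ ⟨i, h⟩).2 h
  refine ⟨e, Subtype.ext ?_⟩
  funext i
  have := he i
  simp only [hp, hq] at this
  show a.1 (e i) = b.1 i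
  cases hb : b.1 i <;> cases ha : a.1 (e i) <;> simp_all

def cnt {n : ℕ} (c v : Vtx n) : ℕ :=
  (univ.filter fun σ : Equiv.Perm (Fin n) => permAct σ c = v).card

lemma cnt_const {n : ℕ} (c v c' v' : Vtx n) : cnt c v = cnt c' v' := by
  obtain ⟨τ, hτ⟩ := exists_perm_eq c' c
  obtain ⟨ρ, hρ⟩ := exists_perm_eq v v'
  have hτ' : permAct τ.symm c = c' := by
    rw [← hτ, permAct_permAct, Equiv.symm_trans_self, permAct_refl]
  have hρ' : permAct ρ.symm v' = v := by
    rw [← hρ, permAct_permAct, Equiv.symm_trans_self, permAct_refl]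
  unfold cnt
  apply Finset.card_bij' (fun σ _ => ρ.trans (σ.trans τ)) (fun μ _ => ρ.symm.trans (μ.trans τ.symm))
  · intro σ hσ
    simp only [mem_filter, mem_univ, true_and] at hσ ⊢
    rw [← permAct_permAct, ← permAct_permAct, hτ, hσ, hρ]
  · intro μ hμ
    simp only [mem_filter, mem_univ, true_and] at hμ ⊢
    rw [← permAct_permAct, ← permAct_permAct, hτ', hμ, hρ']
  · intro σ _; ext i; simp
  · intro μ _; ext i; simp

lemma card_perm_eq {n : ℕ} (c v : Vtx n) :
    Fintype.card (Vtx n) * cnt c v = Fintype.card (Equiv.Perm (Fin n)) := by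
  classical
  have h1 : (univ : Finset (Equiv.Perm (Fin n))).card
      = ∑ w ∈ (univ : Finset (Vtx n)), cnt c w :=
    Finset.card_eq_sum_card_fiberwise (f := fun σ => permAct σ c) (fun σ _ => mem_univ _)
  have h2 : ∑ w ∈ (univ : Finset (Vtx n)), cnt c w = Fintype.card (Vtx n) * cnt c v := by
    rw [Finset.sum_congr rfl (fun w _ => cnt_const c w c v), Finset.sum_const, smul_eq_mul,
      Finset.card_univ]
  rw [← h2, ← h1, Finset.card_univ]

lemma cnt_pos {n : ℕ} (c v : Vtx n) : 0 < cnt c v := by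
  rcases Nat.eq_zero_or_pos (cnt c v) with h | h
  · exfalso
    have := card_perm_eq c v
    rw [h, Nat.mul_zero] at this
    have hp : 0 < Fintype.card (Equiv.Perm (Fin n)) := Fintype.card_pos
    omega
  · exact h

lemma exists_disjoint_copy {n : ℕ} (C : Finset (Vtx n)) (hC : C.card = n)
    (S : Finset (Vtx n)) (hS : S.card * n < Fintype.card (Vtx n)) :
    ∃ σ : Equiv.Perm (Fin n), Disjoint (C.image (permAct σ)) S := by
  classical
  have hV : 0 < Fintype.card (Vtx n) := lt_of_le_of_lt (Nat.zero_le _) hS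
  have hne : Nonempty (Vtx n) := Fintype.card_pos_iff.mp hV
  obtain ⟨v₀⟩ := hne
  by_contra hcon
  push_neg at hcon
  have key : ∀ σ : Equiv.Perm (Fin n),
      1 ≤ (S.filter (fun v => v ∈ C.image (permAct σ))).card := by
    intro σ
    obtain ⟨a, ha1, ha2⟩ := Finset.not_disjoint_iff.mp (hcon σ)
    exact Finset.card_pos.mpr ⟨a, Finset.mem_filter.mpr ⟨ha2, ha1⟩⟩
  have hsum : Fintype.card (Equiv.Perm (Fin n)) ≤
      ∑ σ : Equiv.Perm (Fin n), (S.filter (fun v => v ∈ C.image (permAct σ))).card := by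
    calc Fintype.card (Equiv.Perm (Fin n))
        = ∑ _σ : Equiv.Perm (Fin n), 1 := by simp
      _ ≤ _ := Finset.sum_le_sum (fun σ _ => key σ)
  have heq : ∑ σ : Equiv.Perm (Fin n), (S.filter (fun v => v ∈ C.image (permAct σ))).card
      = ∑ v ∈ S, (univ.filter fun σ : Equiv.Perm (Fin n) => v ∈ C.image (permAct σ)).card := by
    simp_rw [Finset.card_filter]
    exact Finset.sum_comm
  have per_v : ∀ v : Vtx n,
      (univ.filter fun σ : Equiv.Perm (Fin n) => v ∈ C.image (permAct σ)).card
      = ∑ c ∈ C, cnt c v := by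
    intro v
    have hset : (univ.filter fun σ : Equiv.Perm (Fin n) => v ∈ C.image (permAct σ))
        = C.biUnion (fun c => univ.filter fun σ => permAct σ c = v) := by
      ext σ
      simp only [mem_filter, mem_univ, true_and, Finset.mem_image, Finset.mem_biUnion]
    rw [hset]
    apply Finset.card_biUnion
    intro c hc c' hc' hne
    rw [Function.onFun, Finset.disjoint_left]
    intro σ h1 h2
    simp only [mem_filter, mem_univ, true_and] at h1 h2
    exact hne (permAct_injective σ (h1.trans h2.symm))
  have htot : ∑ v ∈ S, (univ.filter fun σ : Equiv.Perm (Fin n) => v ∈ C.image (permAct σ)).card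
      = S.card * (n * cnt v₀ v₀) := by
    calc ∑ v ∈ S, (univ.filter fun σ : Equiv.Perm (Fin n) => v ∈ C.image (permAct σ)).card
        = ∑ v ∈ S, ∑ c ∈ C, cnt c v := Finset.sum_congr rfl (fun v _ => per_v v)
      _ = ∑ _v ∈ S, (n * cnt v₀ v₀) := Finset.sum_congr rfl (fun v _ =>
          (Finset.sum_congr rfl (fun c _ => cnt_const c v v₀ v₀)).trans
            (by rw [Finset.sum_const, hC, smul_eq_mul]))
      _ = S.card * (n * cnt v₀ v₀) := by rw [Finset.sum_const, smul_eq_mul]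
  have hfinal : Fintype.card (Vtx n) * cnt v₀ v₀ ≤ S.card * (n * cnt v₀ v₀) := by
    rw [← card_perm_eq v₀ v₀] at hsum
    omega
  have : Fintype.card (Vtx n) ≤ S.card * n := by
    have hpos := cnt_pos v₀ v₀
    nlinarith
  omega

lemma build {n : ℕ} (hn : 0 < n) (C : Finset (Vtx n)) (hC : (Gn n).IsNClique n C) :
    ∀ t, t * (n * n) ≤ Fintype.card (Vtx n) →
    ∃ 𝒞 : Finset (Finset (Vtx n)), (∀ s ∈ 𝒞, (Gn n).IsNClique n s) ∧
      (𝒞 : Set (Finset (Vtx n))).PairwiseDisjoint id ∧ 𝒞.card = t := by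
  classical
  intro t
  induction t with
  | zero => exact fun _ => ⟨∅, by simp, by simp, rfl⟩
  | succ t ih =>
    intro ht
    obtain ⟨𝒞, h1, h2, h3⟩ := ih (le_trans (Nat.mul_le_mul_right _ (Nat.le_succ t)) ht)
    set S : Finset (Vtx n) := 𝒞.biUnion id with hSdef
    have hScard : S.card ≤ t * n := by
      refine le_trans Finset.card_biUnion_le (le_of_eq ?_)
      have h := Finset.sum_congr (rfl : 𝒞 = 𝒞) (fun s hs => (h1 s hs).2)
      simpa [h3, Finset.sum_const, mul_comm] using h
    have hS : S.card * n < Fintype.card (Vtx n) := by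
      have h4 : S.card * n ≤ t * (n * n) := by nlinarith
      have h5 : t * (n * n) < (t + 1) * (n * n) := by nlinarith
      omega
    obtain ⟨σ, hσ⟩ := exists_disjoint_copy C hC.2 S hS
    set D : Finset (Vtx n) := C.image (permAct σ) with hDdef
    have hDclique : (Gn n).IsNClique n D := clique_image σ hC
    have hDcard : D.card = n := hDclique.2
    have hDne : D.Nonempty := Finset.card_pos.mp (by omega)
    have hDnotmem : D ∉ 𝒞 := by
      intro hmem
      have hsub : D ⊆ S := Finset.subset_biUnion_of_mem id hmem
      have : Disjoint D D := hσ.mono_right hsub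
      rw [disjoint_self] at this
      exact hDne.ne_empty (by simpa using this)
    refine ⟨insert D 𝒞, ?_, ?_, ?_⟩
    · intro s hs
      rcases Finset.mem_insert.mp hs with rfl | hs'
      · exact hDclique
      · exact h1 s hs'
    · rw [Finset.coe_insert]
      refine h2.insert ?_
      intro s hs _
      simp only [id]
      exact (hσ.mono_right (Finset.subset_biUnion_of_mem id hs)).symm.symm
    · rw [Finset.card_insert_of_notMem hDnotmem, h3]

section Had

variable {n : ℕ}

lemma pm_mul {a b : ℝ} (ha : a = 1 ∨ a = -1) (hb : b = 1 ∨ b = -1) :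
    a * b = 1 ∨ a * b = -1 := by
  rcases ha with h | h <;> rcases hb with h' | h' <;> simp [h, h']

noncomputable def eps (M : Matrix (Fin (n+1)) (Fin (n+1)) ℝ) (i : Fin n) : ℝ :=
  -(M i.succ 0 * M 0 0)

noncomputable def Nr (M : Matrix (Fin (n+1)) (Fin (n+1)) ℝ) (i : Fin n) (j : Fin (n+1)) : ℝ :=
  M i.succ j * M 0 j * eps M i

variable {M : Matrix (Fin (n+1)) (Fin (n+1)) ℝ}

lemma eps_pm (hM : IsHadamard M) (i : Fin n) : eps M i = 1 ∨ eps M i = -1 := by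
  rcases pm_mul (hM.1 i.succ 0) (hM.1 0 0) with h | h
  · right; simp [eps, h]
  · left; simp [eps, h]

lemma Nr_pm (hM : IsHadamard M) (i : Fin n) (j : Fin (n+1)) :
    Nr M i j = 1 ∨ Nr M i j = -1 :=
  pm_mul (pm_mul (hM.1 _ _) (hM.1 _ _)) (eps_pm hM i)

lemma Nr_zero (hM : IsHadamard M) (i : Fin n) : Nr M i 0 = -1 := by
  rcases hM.1 i.succ 0 with h | h <;> rcases hM.1 0 0 with h' | h' <;>
    norm_num [Nr, eps, h, h']

lemma Nr_sum (hM : IsHadamard M) (i : Fin n) : ∑ j, Nr M i j = 0 := by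
  have h := hM.2 i.succ 0 (Fin.succ_ne_zero i)
  calc ∑ j, Nr M i j = ∑ j, M i.succ j * M 0 j * eps M i :=
        Finset.sum_congr rfl (fun j _ => rfl)
    _ = (∑ j, M i.succ j * M 0 j) * eps M i := by rw [Finset.sum_mul]
    _ = 0 := by rw [h, zero_mul]

lemma Nr_orth (hM : IsHadamard M) {i i' : Fin n} (h : i ≠ i') :
    ∑ j, Nr M i j * Nr M i' j = 0 := by
  have key : ∀ j, Nr M i j * Nr M i' j
      = (M i.succ j * M i'.succ j) * (eps M i * eps M i') := by
    intro j
    rcases hM.1 0 j with h' | h' <;> simp only [Nr, h'] <;> ring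
  have h2 := hM.2 i.succ i'.succ (by simpa [Fin.succ_inj] using h)
  calc ∑ j, Nr M i j * Nr M i' j
      = ∑ j, (M i.succ j * M i'.succ j) * (eps M i * eps M i') :=
        Finset.sum_congr rfl (fun j _ => key j)
    _ = (∑ j, M i.succ j * M i'.succ j) * (eps M i * eps M i') :=
        (Finset.sum_mul _ _ _).symm
    _ = 0 := by rw [h2, zero_mul]

lemma count_pm {m : ℕ} (u : Fin m → ℝ) (hu : ∀ j, u j = 1 ∨ u j = -1)
    (hsum : ∑ j, u j = 0) :
    2 * (univ.filter fun j => u j = 1).card = m ∧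
    2 * (univ.filter fun j => u j = -1).card = m := by
  classical
  set P := univ.filter fun j => u j = 1 with hP
  set Q := univ.filter fun j => u j = -1 with hQdef
  have hQ : Q = univ.filter fun j => ¬ (u j = 1) := by
    ext j
    rcases hu j with h | h <;> simp [hQdef, h] <;> norm_num
  have hPQ : P.card + Q.card = m := by
    rw [hQ, hP, Finset.card_filter_add_card_filter_not, Finset.card_univ,
      Fintype.card_fin]
  have e1 : ∑ j ∈ P, u j = (P.card : ℝ) :=
    (Finset.sum_congr rfl (fun j hj => ((Finset.mem_filter.mp hj).2 : u j = 1))).trans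
      (by simp; rfl)
  have e2 : ∑ j ∈ Q, u j = -(Q.card : ℝ) :=
    (Finset.sum_congr rfl (fun j hj => ((Finset.mem_filter.mp hj).2 : u j = -1))).trans
      (by simp; rfl)
  have hsplit : ∑ j ∈ P, u j + ∑ j ∈ Q, u j = ∑ j, u j := by
    rw [hQ, hP]
    exact Finset.sum_filter_add_sum_filter_not _ _ _
  have hr : (P.card : ℝ) = (Q.card : ℝ) := by
    rw [e1, e2, hsum] at hsplit
    linarith
  have hn : P.card = Q.card := by exact_mod_cast hr
  omega

lemma card_filter_succ {q : Fin (n+1) → Prop} [DecidablePred q] (h0 : ¬ q 0) :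
    (univ.filter fun j : Fin n => q j.succ).card = (univ.filter q).card := by
  apply Finset.card_bij (fun j _ => j.succ)
  · intro a ha
    simp only [mem_filter, mem_univ, true_and] at ha ⊢
    exact ha
  · intro a _ b _ h
    exact Fin.succ_injective _ h
  · intro b hb
    simp only [mem_filter, mem_univ, true_and] at hb
    induction b using Fin.cases with
    | zero => exact absurd hb h0
    | succ j => exact ⟨j, by simpa using hb, rfl⟩

noncomputable def bvec (M : Matrix (Fin (n+1)) (Fin (n+1)) ℝ) (i : Fin n) : Fin n → Bool :=
  fun j => @decide (Nr M i j.succ = 1) (Classical.propDecidable _)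

lemma bvec_iff (i j : Fin n) : bvec M i j = true ↔ Nr M i j.succ = 1 := by
  simp [bvec]

lemma bvec_false {i j : Fin n} (h : Nr M i j.succ = -1) : bvec M i j = false := by
  have hne : ¬ (Nr M i j.succ = 1) := by rw [h]; norm_num
  rw [← Bool.not_eq_true (bvec M i j), bvec_iff]
  exact hne

lemma bvec_wt (hM : IsHadamard M) (i : Fin n) :
    hammingDist (bvec M i) (fun _ => false) = (n + 1) / 2 := by
  classical
  unfold hammingDist
  have h1 : (univ.filter fun j : Fin n => bvec M i j ≠ (fun _ => false) j)
      = univ.filter (fun j : Fin n => Nr M i j.succ = 1) := by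
    ext j
    simp [bvec_iff]
  rw [h1]
  have h2 := card_filter_succ (q := fun j : Fin (n+1) => Nr M i j = 1)
    (by intro hcon; have hc : Nr M i 0 = 1 := hcon; rw [Nr_zero hM] at hc; norm_num at hc)
  rw [h2]
  have h3 := (count_pm (Nr M i) (Nr_pm hM i) (Nr_sum hM i)).1
  omega

lemma bvec_dist (hM : IsHadamard M) {i i' : Fin n} (hne : i ≠ i') :
    hammingDist (bvec M i) (bvec M i') = (n + 1) / 2 := by
  classical
  unfold hammingDist
  have h1 : (univ.filter fun j : Fin n => bvec M i j ≠ bvec M i' j)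
      = univ.filter (fun j : Fin n => Nr M i j.succ * Nr M i' j.succ = -1) := by
    ext j
    simp only [mem_filter, mem_univ, true_and]
    rcases Nr_pm hM i j.succ with h | h <;> rcases Nr_pm hM i' j.succ with h' | h'
    · simp [(bvec_iff i j).mpr h, (bvec_iff i' j).mpr h', h, h'] <;> norm_num
    · simp [(bvec_iff i j).mpr h, bvec_false h', h, h']
    · simp [bvec_false h, (bvec_iff i' j).mpr h', h, h']
    · simp [bvec_false h, bvec_false h', h, h'] <;> norm_num
  rw [h1]
  have h2 := card_filter_succ (q := fun j : Fin (n+1) => Nr M i j * Nr M i' j = -1)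
    (by
      intro hcon
      have hc : Nr M i 0 * Nr M i' 0 = -1 := hcon
      rw [Nr_zero hM, Nr_zero hM] at hc
      norm_num at hc)
  rw [h2]
  have h3 := (count_pm (fun j => Nr M i j * Nr M i' j)
    (fun j => pm_mul (Nr_pm hM i j) (Nr_pm hM i' j)) (Nr_orth hM hne)).2
  omega

lemma exists_base (hodd : Odd n) (hM : IsHadamard M) :
    ∃ C : Finset (Vtx n), (Gn n).IsNClique n C := by
  classical
  have hpos : 0 < n := by rcases hodd with ⟨k, hk⟩; omega
  have hinj : Function.Injective (fun i : Fin n => bvec M i) := by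
    intro i i' h
    by_contra hne
    have hd := bvec_dist hM hne
    have h' : bvec M i = bvec M i' := h
    rw [h', hammingDist_self] at hd
    omega
  refine ⟨(univ : Finset (Fin n)).image
    (fun i => (⟨bvec M i, bvec_wt hM i⟩ : Vtx n)), ?_, ?_⟩
  · intro a ha b hb hab
    simp only [coe_image, Set.mem_image, mem_coe, coe_univ, Set.image_univ,
      Set.mem_range] at ha hb
    obtain ⟨i, rfl⟩ := ha
    obtain ⟨i', rfl⟩ := hb
    have hii : i ≠ i' := fun hc => hab (by rw [hc])
    rw [Gn, SimpleGraph.fromRel_adj]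
    exact ⟨hab, Or.inl (bvec_dist hM hii)⟩
  · rw [Finset.card_image_of_injective _ (fun i i' h => hinj (congrArg Subtype.val h)),
      Finset.card_univ, Fintype.card_fin]

end Had

end Stmt6Aux

theorem stmt_6 (n : ℕ) (hn : Odd n)
    (hH : ∃ M : Matrix (Fin (n + 1)) (Fin (n + 1)) ℝ, IsHadamard M) :
    ∃ 𝒞 : Finset (Finset {x : Fin n → Bool // hammingDist x (fun _ => false) = (n + 1) / 2}),
      (∀ s ∈ 𝒞, (Gn n).IsNClique n s) ∧
      (𝒞 : Set (Finset {x : Fin n → Bool // hammingDist x (fun _ => false) = (n + 1) / 2})).PairwiseDisjoint id ∧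
      Fintype.card {x : Fin n → Bool // hammingDist x (fun _ => false) = (n + 1) / 2} / n ^ 2 ≤ 𝒞.card := by
  obtain ⟨M, hM⟩ := hH
  have hpos : 0 < n := by rcases hn with ⟨k, hk⟩; omega
  obtain ⟨C, hC⟩ := Stmt6Aux.exists_base hn hM
  obtain ⟨𝒞, h1, h2, h3⟩ := Stmt6Aux.build hpos C hC
    (Fintype.card (Stmt6Aux.Vtx n) / n ^ 2)
    (by
      have h := Nat.div_mul_le_self (Fintype.card (Stmt6Aux.Vtx n)) (n ^ 2)
      calc Fintype.card (Stmt6Aux.Vtx n) / n ^ 2 * (n * n)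
          = Fintype.card (Stmt6Aux.Vtx n) / n ^ 2 * n ^ 2 := by ring
        _ ≤ Fintype.card (Stmt6Aux.Vtx n) := h)
  exact ⟨𝒞, h1, h2, le_of_eq h3.symm⟩
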